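/- arXiv:2411.17664 — 2 statements merged into one kernel-verified Lean document; each statement's English description precedes it below -/
import Mathlib

section
/- Let T be a densely defined operator in a Hilbert space H that is C-symmetric with respect to a conjugation C, let F be a linear subspace of H that is a core for T*, and assume CF ⊆ dom(T̄), where T̄ is the closure of T. Then T̄ is C-selfadjoint: T̄ = C T* C. -/
open InnerProductSpace in
/-- A conjugation on a complex inner ℂ product space: an antilinear involution
satisfying `⟪Cf, Cg⟫ = ⟪g, f⟫`. -/
structure Conjugation (H : Type*) [NormedAddCommGroup H] [InnerProductSpace ℂ H] where
  toFun : H → H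
  map_add' : ∀ x y, toFun (x + y) = toFun x + toFun y
  map_smul' : ∀ (c : ℂ) (x : H), toFun (c • x) = (starRingEnd ℂ c) • toFun x
  invol : ∀ x, toFun (toFun x) = x
  inner_map : ∀ x y, (inner ℂ (toFun x) (toFun y) : ℂ) = inner ℂ y x

/-- `T` is `C`-symmetric: `T ⊆ C T* C`. -/
noncomputable def CSymmetric {H : Type*} [NormedAddCommGroup H] [InnerProductSpace ℂ H]
    [CompleteSpace H] (C : Conjugation H) (T : H →ₗ.[ℂ] H) : Prop :=
  ∀ x : T.domain, ∃ hx : C.toFun x ∈ T.adjoint.domain,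
    C.toFun (T.adjoint ⟨C.toFun x, hx⟩) = T x

/-- `T` is `C`-selfadjoint: `T = C T* C`. -/
noncomputable def CSelfAdjoint {H : Type*} [NormedAddCommGroup H] [InnerProductSpace ℂ H]
    [CompleteSpace H] (C : Conjugation H) (T : H →ₗ.[ℂ] H) : Prop :=
  CSymmetric C T ∧ ∀ y : H, C.toFun y ∈ T.adjoint.domain → y ∈ T.domain

/-- Composition of partially defined linear maps, with its natural (maximal) domain. -/
noncomputable def LinearPMap.pcomp {R E F G : Type*} [Ring R] [AddCommGroup E] [Module R E]
    [AddCommGroup F] [Module R F] [AddCommGroup G] [Module R G]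
    (g : F →ₗ.[R] G) (f : E →ₗ.[R] F) : E →ₗ.[R] G :=
  g.comp (f.domRestrict ((g.domain.comap f.toFun).map f.domain.subtype))
    (by
      rintro ⟨x, hx1, hx2⟩
      obtain ⟨y, hy, hyx⟩ := hx1
      erw [LinearPMap.domRestrict_apply (y := y) (by exact hyx.symm)]
      exact hy)

/-- Natural powers of a partially defined linear map, `T^(n+1) = T ∘ T^n`, with
`T^0` the identity on the whole space. -/
noncomputable def LinearPMap.ppow {R E : Type*} [Ring R] [AddCommGroup E] [Module R E]
    (T : E →ₗ.[R] E) : ℕ → E →ₗ.[R] E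
  | 0 => ⟨⊤, (⊤ : Submodule R E).subtype⟩
  | n + 1 => T.pcomp (T.ppow n)

/-- `F` is a core for the (closed) operator `A`: `F ⊆ dom A` and the closure of the
restriction of `A` to `F` is `A` itself. -/
noncomputable def IsCoreFor {H : Type*} [NormedAddCommGroup H] [InnerProductSpace ℂ H]
    (F : Submodule ℂ H) (A : H →ₗ.[ℂ] H) : Prop :=
  F ≤ A.domain ∧ (A.domRestrict F).closure = A

namespace Conjugation

variable {H : Type*} [NormedAddCommGroup H] [InnerProductSpace ℂ H] (C : Conjugation H)

lemma map_zero' : C.toFun 0 = 0 := by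
  have h := C.map_smul' 0 0
  simpa using h

lemma map_sub' (x y : H) : C.toFun (x - y) = C.toFun x - C.toFun y := by
  have hneg : C.toFun (-y) = -C.toFun y := by
    have h := C.map_smul' (-1) y
    simpa using h
  rw [sub_eq_add_neg, C.map_add', hneg, ← sub_eq_add_neg]

lemma norm_map' (x : H) : ‖C.toFun x‖ = ‖x‖ := by
  have h := C.inner_map x x
  rw [inner_self_eq_norm_sq_to_K, inner_self_eq_norm_sq_to_K] at h
  have h2 : ‖C.toFun x‖ ^ 2 = ‖x‖ ^ 2 := by exact_mod_cast h
  nlinarith [norm_nonneg (C.toFun x), norm_nonneg x]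

lemma continuous' : Continuous C.toFun := by
  have : Isometry C.toFun := by
    apply Isometry.of_dist_eq
    intro a b
    rw [dist_eq_norm, dist_eq_norm, ← C.map_sub', C.norm_map']
  exact this.continuous

lemma inner_C (a b : H) : (inner ℂ (C.toFun a) b : ℂ) = inner ℂ (C.toFun b) a := by
  have h := C.inner_map a (C.toFun b)
  rwa [C.invol] at h

end Conjugation

/-- if `T` is densely defined and `C`-symmetric, `F` is a core for `T*`,
and `C F ⊆ dom T̄`, then the closure `T̄` is `C`-selfadjoint. -/
theorem stmt_11 {H : Type*} [NormedAddCommGroup H] [InnerProductSpace ℂ H] [CompleteSpace H]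
    (C : Conjugation H) (T : H →ₗ.[ℂ] H)
    (hdense : Dense (T.domain : Set H)) (hsym : CSymmetric C T)
    (F : Submodule ℂ H) (hcore : IsCoreFor F T.adjoint)
    (hCF : ∀ x ∈ F, C.toFun x ∈ T.closure.domain) :
    CSelfAdjoint C T.closure := by
  classical
  have Cc : Continuous C.toFun := C.continuous'
  -- the adjoint values on `C` of the domain
  have hsym' : ∀ z : T.domain, ∃ hz : C.toFun z ∈ T.adjoint.domain,
      T.adjoint ⟨C.toFun z, hz⟩ = C.toFun (T z) := by
    intro z
    obtain ⟨hz, heq⟩ := hsym z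
    refine ⟨hz, ?_⟩
    have h := congrArg C.toFun heq
    rwa [C.invol] at h
  -- key identity on the closure of the graph
  have key1 : ∀ z : T.domain, ∀ p ∈ closure (T.graph : Set (H × H)),
      (inner ℂ p.2 (C.toFun z) : ℂ) = inner ℂ p.1 (C.toFun (T z)) := by
    intro z p hp
    have hClosed : IsClosed {p : H × H |
        (inner ℂ p.2 (C.toFun z) : ℂ) = inner ℂ p.1 (C.toFun (T z))} :=
      isClosed_eq (Continuous.inner continuous_snd continuous_const)
        (Continuous.inner continuous_fst continuous_const)
    refine closure_minimal ?_ hClosed hp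
    intro x hx
    rcases T.mem_graph_iff'.1 hx with ⟨u, rfl⟩
    obtain ⟨hz, heq⟩ := hsym' z
    have hfa := (LinearPMap.adjoint_isFormalAdjoint hdense).symm u ⟨C.toFun z, hz⟩
    rw [heq] at hfa
    simpa using hfa
  -- `T` is closable
  have hclos : T.IsClosable := by
    refine ⟨T.graph.topologicalClosure.toLinearPMap,
      (Submodule.toLinearPMap_graph_eq _ ?_).symm⟩
    rintro ⟨x1, x2⟩ hx hx1
    have hx' : (x1, x2) ∈ closure (T.graph : Set (H × H)) := by
      rw [← Submodule.topologicalClosure_coe]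
      exact hx
    simp only at hx1
    have h0 : ∀ z : T.domain, (inner ℂ (C.toFun x2) (z : H) : ℂ) = 0 := by
      intro z
      have h := key1 z (x1, x2) hx'
      rw [hx1] at h
      simp only [inner_zero_left] at h
      calc (inner ℂ (C.toFun x2) (z : H) : ℂ)
          = inner ℂ (C.toFun x2) (C.toFun (C.toFun z)) := by rw [C.invol]
        _ = inner ℂ (C.toFun z) x2 := C.inner_map _ _
        _ = 0 := by rw [← inner_conj_symm, h, map_zero]
    have hz : C.toFun x2 = 0 := hdense.eq_zero_of_inner_left (𝕜 := ℂ) (fun v hv => h0 ⟨v, hv⟩)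
    have h := congrArg C.toFun hz
    rwa [C.invol, C.map_zero'] at h
  have hTgraph : (T.closure.graph : Set (H × H)) = closure (T.graph : Set (H × H)) := by
    rw [← hclos.graph_closure_eq_closure_graph, Submodule.topologicalClosure_coe]
  have hdense2 : Dense (T.closure.domain : Set H) :=
    hdense.mono (fun x hx => T.le_closure.1 hx)
  -- symmetry identity on the closure
  have key2 : ∀ p ∈ (T.closure.graph : Set (H × H)), ∀ q ∈ (T.closure.graph : Set (H × H)),
      (inner ℂ (C.toFun q.1) p.2 : ℂ) = inner ℂ (C.toFun q.2) p.1 := by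
    intro p hp
    have step1 : ∀ q ∈ (T.graph : Set (H × H)),
        (inner ℂ (C.toFun q.1) p.2 : ℂ) = inner ℂ (C.toFun q.2) p.1 := by
      intro q hq
      rcases T.mem_graph_iff'.1 hq with ⟨u, rfl⟩
      have h := key1 u p (hTgraph ▸ hp)
      show (inner ℂ (C.toFun (u : H)) p.2 : ℂ) = inner ℂ (C.toFun (T u)) p.1
      calc (inner ℂ (C.toFun (u : H)) p.2 : ℂ)
          = (starRingEnd ℂ) (inner ℂ p.2 (C.toFun (u : H)) : ℂ) := (inner_conj_symm _ _).symm
        _ = (starRingEnd ℂ) (inner ℂ p.1 (C.toFun (T u)) : ℂ) := by rw [h]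
        _ = inner ℂ (C.toFun (T u)) p.1 := inner_conj_symm _ _
    have hClosed : IsClosed {q : H × H |
        (inner ℂ (C.toFun q.1) p.2 : ℂ) = inner ℂ (C.toFun q.2) p.1} :=
      isClosed_eq (Continuous.inner (Cc.comp continuous_fst) continuous_const)
        (Continuous.inner (Cc.comp continuous_snd) continuous_const)
    intro q hq
    have hq' : q ∈ closure (T.graph : Set (H × H)) := hTgraph ▸ hq
    exact closure_minimal step1 hClosed hq'
  -- Part A : the closure is C-symmetric
  have symA : CSymmetric C T.closure := by
    intro x
    have hx2 : ∀ z : T.closure.domain, (inner ℂ (C.toFun (T.closure x)) (z : H) : ℂ)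
        = inner ℂ (C.toFun (x : H)) (T.closure z) := by
      intro z
      have h := key2 ((x : H), T.closure x) (T.closure.mem_graph x)
        ((z : H), T.closure z) (T.closure.mem_graph z)
      calc (inner ℂ (C.toFun (T.closure x)) (z : H) : ℂ)
          = inner ℂ (C.toFun (T.closure x)) (C.toFun (C.toFun (z : H))) := by rw [C.invol]
        _ = inner ℂ (C.toFun (z : H)) (T.closure x) := C.inner_map _ _
        _ = inner ℂ (C.toFun (T.closure z)) (x : H) := h
        _ = inner ℂ (C.toFun (x : H)) (T.closure z) := by
            rw [← C.inner_map (T.closure z) (C.toFun (x : H)), C.invol]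
    have hmem : C.toFun (x : H) ∈ T.closure.adjoint.domain :=
      LinearPMap.mem_adjoint_domain_of_exists _ ⟨C.toFun (T.closure x), hx2⟩
    refine ⟨hmem, ?_⟩
    have hval : T.closure.adjoint ⟨C.toFun (x : H), hmem⟩ = C.toFun (T.closure x) :=
      LinearPMap.adjoint_apply_eq hdense2 _ hx2
    rw [hval, C.invol]
  -- the adjoints of `T` and its closure agree
  have agree : ∀ w, ∀ hw : w ∈ T.closure.adjoint.domain,
      ∃ hw' : w ∈ T.adjoint.domain,
        T.adjoint ⟨w, hw'⟩ = T.closure.adjoint ⟨w, hw⟩ := by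
    intro w hw
    have hfa := LinearPMap.adjoint_isFormalAdjoint hdense2 (⟨w, hw⟩ : T.closure.adjoint.domain)
    have h : ∀ x : T.domain,
        (inner ℂ (T.closure.adjoint ⟨w, hw⟩) (x : H) : ℂ) = inner ℂ w (T x) := by
      intro x
      have hx' : (x : H) ∈ T.closure.domain := T.le_closure.1 x.2
      have h2 := hfa ⟨(x : H), hx'⟩
      have h3 : T x = T.closure ⟨(x : H), hx'⟩ := T.le_closure.2 rfl
      rw [← h3] at h2
      exact h2
    have hw' : w ∈ T.adjoint.domain :=
      LinearPMap.mem_adjoint_domain_of_exists _ ⟨_, h⟩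
    exact ⟨hw', LinearPMap.adjoint_apply_eq hdense _ h⟩
  refine ⟨symA, ?_⟩
  -- Part B
  intro y hy
  obtain ⟨hy', hyval⟩ := agree _ hy
  by_cases hA : (T.adjoint.domRestrict F).IsClosable
  · -- closable case
    have hgraph : (T.adjoint.graph : Set (H × H))
        = closure ((T.adjoint.domRestrict F).graph : Set (H × H)) := by
      conv_lhs => rw [← hcore.2]
      rw [← hA.graph_closure_eq_closure_graph, Submodule.topologicalClosure_coe]
    have hG : IsClosed {p : H × H |
        (C.toFun p.1, C.toFun p.2) ∈ (T.closure.graph : Set (H × H))} := by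
      have hcont : Continuous fun p : H × H => (C.toFun p.1, C.toFun p.2) :=
        (Cc.comp continuous_fst).prodMk (Cc.comp continuous_snd)
      exact IsClosed.preimage hcont hclos.closure_isClosed
    have hsubG : ((T.adjoint.domRestrict F).graph : Set (H × H)) ⊆ {p : H × H |
        (C.toFun p.1, C.toFun p.2) ∈ (T.closure.graph : Set (H × H))} := by
      intro p hp
      rcases (T.adjoint.domRestrict F).mem_graph_iff'.1 hp with ⟨u, rfl⟩
      have hfF : (u : H) ∈ F := u.2.1
      have hfD : (u : H) ∈ T.adjoint.domain := u.2.2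
      have hCf : C.toFun (u : H) ∈ T.closure.domain := hCF _ hfF
      obtain ⟨h1, h2⟩ := symA ⟨C.toFun (u : H), hCf⟩
      have e : C.toFun (C.toFun (u : H)) = (u : H) := C.invol _
      have hf1 : (u : H) ∈ T.closure.adjoint.domain := e ▸ h1
      have hsub : (⟨C.toFun ((⟨C.toFun (u : H), hCf⟩ : T.closure.domain) : H), h1⟩ :
          T.closure.adjoint.domain) = ⟨(u : H), hf1⟩ := Subtype.ext e
      rw [hsub] at h2
      obtain ⟨hw', hval⟩ := agree (u : H) hf1
      have hval2 : T.adjoint ⟨(u : H), hfD⟩ = T.closure.adjoint ⟨(u : H), hf1⟩ := by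
        have : (⟨(u : H), hw'⟩ : T.adjoint.domain) = ⟨(u : H), hfD⟩ := rfl
        rw [← this]; exact hval
      have hDR : (T.adjoint.domRestrict F) u = T.adjoint ⟨(u : H), hfD⟩ :=
        LinearPMap.domRestrict_apply rfl
      have hkey : C.toFun ((T.adjoint.domRestrict F) u) = T.closure ⟨C.toFun (u : H), hCf⟩ := by
        rw [hDR, hval2, h2]
      have hmem := T.closure.mem_graph ⟨C.toFun (u : H), hCf⟩
      simp only [Set.mem_setOf_eq, SetLike.mem_coe]
      show (C.toFun (u : H), C.toFun ((T.adjoint.domRestrict F) u)) ∈ T.closure.graph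
      rw [hkey]
      exact hmem
    have hp : (C.toFun y, T.adjoint ⟨C.toFun y, hy'⟩) ∈ (T.adjoint.graph : Set (H × H)) :=
      T.adjoint.mem_graph ⟨C.toFun y, hy'⟩
    rw [hgraph] at hp
    have hmem := closure_minimal hsubG hG hp
    simp only [Set.mem_setOf_eq, SetLike.mem_coe] at hmem
    rcases T.closure.mem_graph_iff.1 hmem with ⟨u, hu1, hu2⟩
    simp only [C.invol] at hu1
    exact hu1 ▸ u.2
  · -- non-closable case: the restriction is its own closure
    have heq : T.adjoint = T.adjoint.domRestrict F := by
      have h := hcore.2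
      rw [LinearPMap.closure_def' hA] at h
      exact h.symm
    have h' : C.toFun y ∈ (T.adjoint.domRestrict F).domain := by
      rw [← heq]; exact hy'
    have hyF : C.toFun y ∈ F := h'.1
    have h := hCF _ hyF
    rwa [C.invol] at h
end

section
/- Let W_λ be a bilateral weighted shift in ℓ²(ℤ) with all weights λₙ ≠ 0, C-symmetric with respect to a conjugation C satisfying C eₙ ∈ dom(W_λ) for all n ∈ ℤ. Then there exists k ∈ ℤ such that |λₙ| = |λ_{k−n}| for all n ∈ ℤ. -/
/-- `W` is the bilateral weighted shift in `ℓ²(ℤ)` with weights `lam`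
(`W eₙ = lam n • e_{n+1}`): it has the maximal domain `{f : Σ |lam n * f n|² < ∞}` and
acts by `(W f)(n) = lam (n-1) * f (n-1)`. -/
def IsBilateralShift (lam : ℤ → ℂ) (W : lp (fun _ : ℤ => ℂ) 2 →ₗ.[ℂ] lp (fun _ : ℤ => ℂ) 2) :
    Prop :=
  (∀ f : lp (fun _ : ℤ => ℂ) 2, f ∈ W.domain ↔ Memℓp (fun n => lam n * f n) 2) ∧
  (∀ f : W.domain, ∀ n : ℤ,
    (W f : lp (fun _ : ℤ => ℂ) 2) n = lam (n - 1) * (f : lp (fun _ : ℤ => ℂ) 2) (n - 1))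

/-- The canonical orthonormal basis of `ℓ²(ℤ)`. -/
noncomputable def eZ (n : ℤ) : lp (fun _ : ℤ => ℂ) 2 := lp.single 2 n 1

/-- if a bilateral weighted shift `W_λ` in `ℓ²(ℤ)` with all weights
nonzero is `C`-symmetric with `C eₙ ∈ dom W_λ` for all `n ∈ ℤ`, then there is `k ∈ ℤ`
with `|λₙ| = |λ_{k-n}|` for all `n ∈ ℤ`. -/
theorem stmt_19 (lam : ℤ → ℂ) (hlam : ∀ n, lam n ≠ 0)
    (W : lp (fun _ : ℤ => ℂ) 2 →ₗ.[ℂ] lp (fun _ : ℤ => ℂ) 2)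
    (hW : IsBilateralShift lam W)
    (C : Conjugation (lp (fun _ : ℤ => ℂ) 2)) (hsym : CSymmetric C W)
    (hdom : ∀ n : ℤ, C.toFun (eZ n) ∈ W.domain) :
    ∃ k : ℤ, ∀ n : ℤ, ‖lam n‖ = ‖lam (k - n)‖ := by
  classical
  obtain ⟨hWdom, hWapp⟩ := hW
  -- coordinates of basis vectors
  have heZ : ∀ n m : ℤ, (eZ n : lp (fun _ : ℤ => ℂ) 2) m = if m = n then 1 else 0 := by
    intro n m
    rw [eZ, lp.single_apply]; split_ifs with h <;> simp [h]
  -- basis vectors lie in the domain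
  have heZdom : ∀ n : ℤ, eZ n ∈ W.domain := by
    intro n
    rw [hWdom]
    have h : (fun m => lam m * (eZ n : lp (fun _ : ℤ => ℂ) 2) m)
        = ⇑(lp.single 2 n (lam n) : lp (fun _ : ℤ => ℂ) 2) := by
      funext m
      by_cases h : m = n
      · subst h; simp [heZ, lp.single_apply_self]
      · simp [heZ, h, lp.single_apply_ne _ _ _ h]
    rw [h]; exact lp.memℓp _
  -- action of W on basis vectors
  have hWe : ∀ n : ℤ, (W ⟨eZ n, heZdom n⟩ : lp (fun _ : ℤ => ℂ) 2) = lam n • eZ (n+1) := by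
    intro n
    apply lp.ext; funext m
    rw [hWapp ⟨eZ n, heZdom n⟩ m]
    by_cases h : m = n + 1
    · have h1 : m - 1 = n := by omega
      simp [heZ, h, h1, lp.coeFn_smul]
    · have h1 : m - 1 ≠ n := by omega
      simp [heZ, h, h1, lp.coeFn_smul]
  -- density of the domain
  have hdense : Dense (W.domain : Set (lp (fun _ : ℤ => ℂ) 2)) := by
    intro f
    refine mem_closure_of_tendsto (lp.hasSum_single ENNReal.ofNat_ne_top f)
      (Filter.Eventually.of_forall fun s => ?_)
    refine Submodule.sum_mem _ fun i _ => ?_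
    have h : (lp.single 2 i (f i) : lp (fun _ : ℤ => ℂ) 2) = f i • eZ i := by
      rw [eZ, ← lp.single_smul]; norm_num
    rw [h]
    exact W.domain.smul_mem _ (heZdom i)
  -- the defining computation for the adjoint on basis vectors
  have key : ∀ n : ℤ, ∀ x : W.domain,
      (inner ℂ ((starRingEnd ℂ) (lam (n-1)) • eZ (n-1)) (x : lp (fun _ : ℤ => ℂ) 2) : ℂ)
        = inner ℂ (eZ n) (W x : lp (fun _ : ℤ => ℂ) 2) := by
    intro n x
    rw [inner_smul_left, Complex.conj_conj, eZ, eZ, lp.inner_single_left, lp.inner_single_left,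
      hWapp x n]
    simp [RCLike.inner_apply]
  have haZdom : ∀ n : ℤ, eZ n ∈ W.adjoint.domain := fun n =>
    W.mem_adjoint_domain_of_exists _ ⟨_, key n⟩
  have hWae : ∀ n : ℤ, ∀ h : eZ n ∈ W.adjoint.domain,
      (W.adjoint ⟨eZ n, h⟩ : lp (fun _ : ℤ => ℂ) 2)
        = (starRingEnd ℂ) (lam (n-1)) • eZ (n-1) :=
    fun n h => W.adjoint_apply_eq hdense ⟨eZ n, h⟩ (key n)
  -- the matrix of C
  set sig : ℤ → ℤ → ℂ := fun m n => (C.toFun (eZ n) : lp (fun _ : ℤ => ℂ) 2) m with hsig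
  -- relation (A), from C-symmetry applied to basis vectors
  have hA : ∀ m n : ℤ, lam n * (starRingEnd ℂ) (sig m (n+1))
      = lam m * (starRingEnd ℂ) (sig (m+1) n) := by
    intro m n
    obtain ⟨hx, heq⟩ := hsym ⟨eZ n, heZdom n⟩
    have hval : (W.adjoint ⟨C.toFun (eZ n), hx⟩ : lp (fun _ : ℤ => ℂ) 2)
        = (starRingEnd ℂ) (lam n) • C.toFun (eZ (n+1)) := by
      have h1 : C.toFun (W.adjoint ⟨C.toFun (eZ n), hx⟩ : lp (fun _ : ℤ => ℂ) 2)
          = lam n • eZ (n+1) := by rw [heq]; exact hWe n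
      have h2 := congrArg C.toFun h1
      rw [C.invol, C.map_smul'] at h2
      exact h2
    have hform := W.adjoint_isFormalAdjoint hdense ⟨C.toFun (eZ n), hx⟩ ⟨eZ m, heZdom m⟩
    rw [hval, hWe m, inner_smul_left, inner_smul_right, Complex.conj_conj] at hform
    simp only [eZ] at hform
    rw [lp.inner_single_right, lp.inner_single_right] at hform
    simpa [RCLike.inner_apply, hsig, eZ] using hform
  -- relation (B), from C-symmetry applied to C eₙ
  have hB : ∀ m n : ℤ, lam m * sig m (n+1) = lam n * sig (m+1) n := by
    intro m n
    obtain ⟨hx, heq⟩ := hsym ⟨C.toFun (eZ (n+1)), hdom (n+1)⟩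
    have hc : C.toFun (C.toFun (eZ (n+1))) = eZ (n+1) := C.invol _
    have hx' : eZ (n+1) ∈ W.adjoint.domain := hc ▸ hx
    have hsub : (⟨C.toFun (C.toFun (eZ (n+1))), hx⟩ : W.adjoint.domain)
        = ⟨eZ (n+1), hx'⟩ := Subtype.ext hc
    rw [hsub, hWae (n+1) hx'] at heq
    have hn1 : n + 1 - 1 = n := by omega
    rw [hn1, C.map_smul', Complex.conj_conj] at heq
    -- heq : lam n • C.toFun (eZ n) = W ⟨C.toFun (eZ (n+1)), hdom (n+1)⟩
    have hcoord := congrArg (fun f : lp (fun _ : ℤ => ℂ) 2 => f (m+1)) heq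
    simp only [lp.coeFn_smul, Pi.smul_apply, smul_eq_mul] at hcoord
    rw [hWapp ⟨C.toFun (eZ (n+1)), hdom (n+1)⟩ (m+1)] at hcoord
    have hm1 : m + 1 - 1 = m := by omega
    rw [hm1] at hcoord
    exact hcoord.symm
  -- nonvanishing propagates along antidiagonals
  have hnz1 : ∀ m n : ℤ, sig (m+1) n ≠ 0 → sig m (n+1) ≠ 0 := by
    intro m n h hc
    apply h
    have := hB m n
    rw [hc, mul_zero] at this
    exact (mul_eq_zero.mp this.symm).resolve_left (hlam n)
  have hnz2 : ∀ m n : ℤ, sig m (n+1) ≠ 0 → sig (m+1) n ≠ 0 := by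
    intro m n h hc
    apply h
    have := hB m n
    rw [hc, mul_zero] at this
    exact (mul_eq_zero.mp this).resolve_left (hlam m)
  -- C e₀ ≠ 0, hence some matrix entry on row 0 is nonzero
  have hC0 : C.toFun (0 : lp (fun _ : ℤ => ℂ) 2) = 0 := by
    have h := C.map_add' 0 0
    rw [add_zero] at h
    exact (left_eq_add.mp h)
  obtain ⟨j, hj⟩ : ∃ j : ℤ, sig j 0 ≠ 0 := by
    by_contra h
    push_neg at h
    have hCe : C.toFun (eZ 0) = 0 := by
      apply lp.ext; funext m
      simpa [hsig] using h m
    have he0 : eZ 0 = 0 := by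
      have := congrArg C.toFun hCe
      rwa [C.invol, hC0] at this
    have := congrArg (fun f : lp (fun _ : ℤ => ℂ) 2 => f 0) he0
    simp [heZ] at this
  -- all entries on the antidiagonal through (j, 0) are nonzero
  have hdiag : ∀ p : ℤ, sig p (j - p) ≠ 0 := by
    intro p
    refine Int.inductionOn' p j ?_ ?_ ?_
    · simpa using hj
    · intro k _ ih
      have h1 : j - k = (j - (k+1)) + 1 := by ring
      rw [h1] at ih
      exact hnz2 k (j - (k+1)) ih
    · intro k _ ih
      have h1 : j - (k - 1) = (j - k) + 1 := by ring
      rw [h1]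
      refine hnz1 (k-1) (j - k) ?_
      have h2 : k - 1 + 1 = k := by ring
      rw [h2]
      exact ih
  -- conclude
  refine ⟨j - 1, fun n => ?_⟩
  set m := j - 1 - n with hm
  have hu : sig (m+1) n ≠ 0 := by
    have h := hdiag (m+1)
    have h1 : j - (m+1) = n := by omega
    rwa [h1] at h
  have e1 := congrArg norm (hA m n)
  have e2 := congrArg norm (hB m n)
  rw [norm_mul, norm_mul, RCLike.norm_conj, RCLike.norm_conj] at e1
  rw [norm_mul, norm_mul] at e2
  have hune : ‖sig (m+1) n‖ ≠ 0 := norm_ne_zero_iff.mpr hu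
  have h3 : ‖lam m‖^2 * ‖sig (m+1) n‖ = ‖lam n‖^2 * ‖sig (m+1) n‖ := by
    linear_combination ‖lam n‖ * e2 - ‖lam m‖ * e1
  have h4 : ‖lam m‖^2 = ‖lam n‖^2 := mul_right_cancel₀ hune h3
  have h5 : ‖lam m‖ = ‖lam n‖ := by
    refine le_antisymm ?_ ?_ <;> nlinarith [norm_nonneg (lam m), norm_nonneg (lam n)]
  exact h5.symm
end
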